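/- For an odd prime p, the polynomial g_p(x) = (x^p - x)/p + 1 has all its complex zeros strictly outside the unit circle. -/

import Mathlib

open Polynomial

theorem roots_of_gp_outside_unit_circle (p : ℕ) (hp : p.Prime) (hodd : Odd p)
    (α : ℂ) (hroot : aeval α ((C (1 / (p : ℚ))) * (X ^ p - X) + 1) = 0) :
    1 < ‖α‖ := by
  have hp3 : 3 ≤ p := by
    have := hp.two_le
    rcases Nat.lt_or_ge p 3 with h | h
    · interval_cases p
      · exact absurd hodd (by decide)
    · exact h
  have hpne : (p : ℂ) ≠ 0 := by exact_mod_cast hp.ne_zero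
  simp only [map_add, map_mul, map_sub, map_pow, aeval_C, aeval_X, map_one] at hroot
  rw [show (algebraMap ℚ ℂ) (1 / (p : ℚ)) = 1 / (p : ℂ) by push_cast; ring] at hroot
  have key : α ^ p - α = -(p : ℂ) := by
    field_simp at hroot
    linear_combination hroot
  by_contra h
  push_neg at h
  have h1 : ‖α ^ p - α‖ ≤ 2 := by
    calc ‖α ^ p - α‖ ≤ ‖α ^ p‖ + ‖α‖ :=
          by simpa [sub_eq_add_neg] using norm_add_le (α ^ p) (-α)
      _ ≤ 1 + 1 := by
          have : ‖α ^ p‖ ≤ 1 := by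
            rw [norm_pow]; exact pow_le_one₀ (norm_nonneg α) h
          linarith
      _ = 2 := by norm_num
  rw [key] at h1
  simp only [norm_neg, Complex.norm_natCast] at h1
  exact absurd h1 (by exact_mod_cast (by omega : ¬ p ≤ 2))
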